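/- Let (E,d) be a metric space, x ∈ D([0,T], E) a càdlàg path with jump times (t_k) ordered by decreasing jump size, and φ an admissible path function for x. Fix a summable positive sequence (r_k) with r = Σ r_k. Define τ(t) = t + Σ_k r_k·1_{t_k ≤ t} and the interpolated path x̂ : [0,T+r] → E by x̂(s) = x(t) if s = τ(t), and x̂(s) = φ(x(t_k-), x(t_k))((s - τ(t_k-))/r_k) if s ∈ [τ(t_k-), τ(t_k)). If x has finitely many jumps, then x̂ is continuous on [0, T+r]. -/

import Mathlib

open Set Filter Topology

/-- Since there are finitely many jump times, each point `s` is separated from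
all jump times different from `s`. -/
private lemma exists_sep {n : ℕ} (t : Fin n → ℝ) (s : ℝ) :
    ∃ δ > 0, ∀ j, t j ≠ s → δ ≤ |t j - s| := by
  classical
  set F : Finset ℝ := insert 1 (Finset.univ.image (fun j => if t j = s then 1 else |t j - s|))
    with hF
  have hne : F.Nonempty := ⟨1, Finset.mem_insert_self _ _⟩
  have hpos : ∀ a ∈ F, (0:ℝ) < a := by
    intro a ha
    rw [hF, Finset.mem_insert] at ha
    rcases ha with h | h
    · rw [h]; norm_num
    · obtain ⟨j, -, hj⟩ := Finset.mem_image.mp h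
      rw [← hj]
      split
      · norm_num
      · next h' => exact abs_pos.mpr (sub_ne_zero.mpr h')
  refine ⟨F.min' hne, hpos _ (F.min'_mem hne), ?_⟩
  intro j hj
  have hmem : |t j - s| ∈ F := by
    rw [hF]
    refine Finset.mem_insert_of_mem (Finset.mem_image.mpr ⟨j, Finset.mem_univ _, ?_⟩)
    rw [if_neg hj]
  exact F.min'_le _ hmem

/-- Fill-in of finitely many jumps of a càdlàg path `x` by path functions yields a
continuous path on `[0, T + r]`. Here:
* `t k` are the (distinct) jump times, lying in `(0, T]`;
* `xl s` is the left limit of `x` at `s`;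
* `Φ k` is the admissible path function interpolating from `xl (t k)` to `x (t k)`;
* `rk k > 0` are the inserted interval lengths, `r = ∑ rk`;
* `τ s = s + ∑_{k : t k ≤ s} rk k` is the time extension;
* `xhat` is the interpolated path, specified on `τ '' [0,T]` and on the inserted
  intervals `[τ (t k) - rk k, τ (t k))`. -/
theorem interpolated_path_continuous_of_finitely_many_jumps
    {E : Type*} [MetricSpace E]
    (T : ℝ) (hT : 0 < T)
    (n : ℕ) (t : Fin n → ℝ) (htmem : ∀ k, t k ∈ Ioc 0 T) (htinj : Function.Injective t)
    (rk : Fin n → ℝ) (hrk : ∀ k, 0 < rk k) (r : ℝ) (hr : r = ∑ k, rk k)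
    (x : ℝ → E) (xl : ℝ → E)
    -- x is right-continuous on [0, T)
    (hright : ∀ s ∈ Ico 0 T, Tendsto x (𝓝[Ici s] s) (𝓝 (x s)))
    -- x has left limits xl on (0, T]
    (hleft : ∀ s ∈ Ioc 0 T, Tendsto x (𝓝[Iio s] s) (𝓝 (xl s)))
    -- the only jumps of x are at the times t k
    (hjumps : ∀ s ∈ Ioc 0 T, xl s ≠ x s → ∃ k, t k = s)
    -- admissible path functions interpolating the jumps
    (Φ : Fin n → ℝ → E)
    (hΦcont : ∀ k, ContinuousOn (Φ k) (Icc 0 1))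
    (hΦ0 : ∀ k, Φ k 0 = xl (t k))
    (hΦ1 : ∀ k, Φ k 1 = x (t k))
    (τ : ℝ → ℝ) (hτ : ∀ s, τ s = s + ∑ k, if t k ≤ s then rk k else 0)
    (xhat : ℝ → E)
    (hhat₁ : ∀ s ∈ Icc 0 T, xhat (τ s) = x s)
    (hhat₂ : ∀ k, ∀ u ∈ Icc (0:ℝ) 1, xhat (τ (t k) - rk k + u * rk k) = Φ k u) :
    ContinuousOn xhat (Icc 0 (T + r)) := by
  classical
  set M : ℝ := T + r with hM
  set C : ℝ → ℝ := fun s => ∑ k, if t k ≤ s then rk k else 0 with hCdef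
  have hτ' : ∀ s, τ s = s + C s := hτ
  have hCmono : Monotone C := by
    intro u v huv
    refine Finset.sum_le_sum fun j _ => ?_
    by_cases h : t j ≤ u
    · rw [if_pos h, if_pos (h.trans huv)]
    · rw [if_neg h]
      split
      · exact (hrk j).le
      · exact le_rfl
  have hτmono : StrictMono τ := by
    intro u v huv
    rw [hτ' u, hτ' v]
    have := hCmono huv.le
    linarith
  have hτle : Monotone τ := hτmono.monotone
  have hτ0 : τ 0 = 0 := by
    rw [hτ']
    have h0 : C 0 = 0 := Finset.sum_eq_zero fun j _ => if_neg (not_le.mpr (htmem j).1)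
    rw [h0]; ring
  have hτT : τ T = M := by
    rw [hτ', hM, hr]
    have hCT : C T = ∑ k, rk k := Finset.sum_congr rfl fun j _ => if_pos (htmem j).2
    rw [hCT]
  have hCeq : ∀ u v, (∀ j, t j ≤ u ↔ t j ≤ v) → C u = C v := by
    intro u v h
    exact Finset.sum_congr rfl fun j _ => if_congr (h j) rfl rfl
  -- C is constant just to the right of any point
  have hCright : ∀ s δ, (∀ j, t j ≠ s → δ ≤ |t j - s|) → ∀ u, s ≤ u → u < s + δ → C u = C s := by
    intro s δ hδ u hsu huδ
    refine hCeq u s fun j => ⟨fun h => ?_, fun h => h.trans hsu⟩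
    by_contra hjs
    have h1 : s < t j := not_le.mp hjs
    have hne : t j ≠ s := fun e => hjs (le_of_eq e)
    have h2 := hδ j hne
    rw [abs_of_pos (by linarith)] at h2
    linarith
  -- C is constant just to the left of a non-jump point
  have hCleftNo : ∀ s δ, (∀ j, t j ≠ s → δ ≤ |t j - s|) → (∀ j, t j ≠ s) →
      ∀ u, s - δ < u → u ≤ s → C u = C s := by
    intro s δ hδ hnj u h1 h2
    refine hCeq u s fun j => ⟨fun h => h.trans h2, fun h => ?_⟩
    have hne := hnj j
    have h3 := hδ j hne
    have hlt : t j < s := lt_of_le_of_ne h hne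
    rw [abs_of_neg (by linarith)] at h3
    linarith
  -- C drops by rk k just to the left of the jump time t k
  have hCleftJump : ∀ k δ, (∀ j, t j ≠ t k → δ ≤ |t j - t k|) →
      ∀ u, t k - δ < u → u < t k → C u = C (t k) - rk k := by
    intro k δ hδ u h1 h2
    have hkey : C (t k) - C u = rk k := by
      rw [hCdef]
      simp only
      rw [← Finset.sum_sub_distrib, Finset.sum_eq_single k]
      · rw [if_pos le_rfl, if_neg (not_le.mpr h2)]; ring
      · intro j _ hjk
        have hne : t j ≠ t k := fun e => hjk (htinj e)
        have h3 := hδ j hne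
        by_cases hle : t j ≤ t k
        · have hlt : t j < t k := lt_of_le_of_ne hle hne
          rw [abs_of_neg (by linarith)] at h3
          rw [if_pos hle, if_pos (by linarith : t j ≤ u)]; ring
        · rw [if_neg hle, if_neg (fun h => hle (le_of_lt (lt_of_le_of_lt h h2)))]; ring
      · intro h; exact absurd (Finset.mem_univ k) h
    linarith
  -- Coverage: every point of [0, M] is in the image of τ or in an inserted interval
  have hcover : ∀ y ∈ Icc (0:ℝ) M,
      (∃ s ∈ Icc (0:ℝ) T, τ s = y) ∨ ∃ k, τ (t k) - rk k ≤ y ∧ y < τ (t k) := by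
    intro y hy
    set A : Set ℝ := {u | u ∈ Icc (0:ℝ) T ∧ τ u ≤ y} with hA
    have h0A : (0:ℝ) ∈ A := ⟨⟨le_rfl, hT.le⟩, by rw [hτ0]; exact hy.1⟩
    have hAne : A.Nonempty := ⟨0, h0A⟩
    have hAbdd : BddAbove A := ⟨T, fun u hu => hu.1.2⟩
    set s := sSup A with hs
    have hs0 : 0 ≤ s := le_csSup hAbdd h0A
    have hsT : s ≤ T := csSup_le hAne fun u hu => hu.1.2
    obtain ⟨δ, hδpos, hδ⟩ := exists_sep t s
    rcases lt_trichotomy (τ s) y with hlt | heq | hgt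
    · exfalso
      have hsT' : s < T := by
        rcases eq_or_lt_of_le hsT with h | h
        · exfalso; rw [h, hτT] at hlt; exact absurd hy.2 (not_le.mpr hlt)
        · exact h
      set ε := min (min δ (T - s)) (y - τ s) with hε
      have hε1 : ε ≤ δ := le_trans (min_le_left _ _) (min_le_left _ _)
      have hε2 : ε ≤ T - s := le_trans (min_le_left _ _) (min_le_right _ _)
      have hε3 : ε ≤ y - τ s := min_le_right _ _
      have hεpos : 0 < ε := by
        refine lt_min (lt_min hδpos (by linarith)) (by linarith)
      have hu : s + ε / 2 ∈ A := by
        refine ⟨⟨by linarith, by linarith⟩, ?_⟩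
        have hCu : C (s + ε / 2) = C s :=
          hCright s δ hδ _ (by linarith) (by linarith)
        rw [hτ', hCu]
        rw [hτ'] at hε3
        linarith
      have := le_csSup hAbdd hu
      linarith
    · exact Or.inl ⟨s, ⟨hs0, hsT⟩, heq⟩
    · right
      have hs0' : 0 < s := by
        rcases eq_or_lt_of_le hs0 with h | h
        · exfalso; rw [← h, hτ0] at hgt; exact absurd hy.1 (not_le.mpr hgt)
        · exact h
      set δ' := min δ s with hδ'
      have hδ'pos : 0 < δ' := lt_min hδpos hs0'
      have hδ'δ : δ' ≤ δ := min_le_left _ _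
      have hstep1 : ∀ v, s - δ' < v → v < s → τ v ≤ y := by
        intro v h1 h2
        by_contra hvy
        push_neg at hvy
        have hub : ∀ w ∈ A, w ≤ v := by
          intro w hw
          by_contra hwv
          push_neg at hwv
          exact absurd (hτle hwv.le) (not_le.mpr (lt_of_le_of_lt hw.2 hvy))
        have := csSup_le hAne hub
        linarith
      have hjump : ∃ k, t k = s := by
        by_contra hnj
        push_neg at hnj
        have hkey : s + C s ≤ y := by
          by_contra hys
          push_neg at hys
          set m := min δ' (s + C s - y) with hm
          have hm1 : m ≤ δ' := min_le_left _ _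
          have hm2 : m ≤ s + C s - y := min_le_right _ _
          have hmpos : 0 < m := lt_min hδ'pos (by linarith)
          have hv := hstep1 (s - m / 2) (by linarith) (by linarith)
          rw [hτ', hCleftNo s δ hδ hnj (s - m / 2) (by linarith) (by linarith)] at hv
          linarith
        rw [hτ'] at hgt
        linarith
      obtain ⟨k, hk⟩ := hjump
      refine ⟨k, ?_, by rw [hk]; exact hgt⟩
      by_contra hys
      push_neg at hys
      rw [hk, hτ'] at hys
      set m := min δ' (s + C s - rk k - y) with hm
      have hm1 : m ≤ δ' := min_le_left _ _
      have hm2 : m ≤ s + C s - rk k - y := min_le_right _ _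
      have hmpos : 0 < m := lt_min hδ'pos (by linarith)
      have hv := hstep1 (s - m / 2) (by linarith) (by linarith)
      have hsep' : ∀ j, t j ≠ t k → δ ≤ |t j - t k| := by rw [hk]; exact hδ
      have hCv : C (s - m / 2) = C (t k) - rk k := by
        refine hCleftJump k δ hsep' (s - m / 2) ?_ ?_ <;> rw [hk] <;> linarith
      rw [hτ', hCv, hk] at hv
      linarith
  -- right-side helper
  have hrightHelp : ∀ (y δ : ℝ), 0 < δ → ∀ g : ℝ → E,
      (∀ z, y ≤ z → z < y + δ → xhat z = g z) →
      Tendsto g (𝓝[Ici y] y) (𝓝 (xhat y)) → ContinuousWithinAt xhat (Ici y) y := by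
    intro y δ hδ g heq hg
    have hmem : Ico y (y + δ) ∈ 𝓝[Ici y] y := Ico_mem_nhdsGE_of_mem ⟨le_rfl, by linarith⟩
    have hEq : g =ᶠ[𝓝[Ici y] y] xhat := by
      filter_upwards [hmem] with z hz
      exact (heq z hz.1 hz.2).symm
    exact hg.congr' hEq
  -- left-side helper
  have hleftHelp : ∀ (y δ : ℝ), 0 < δ → ∀ g : ℝ → E,
      (∀ z, y - δ < z → z < y → xhat z = g z) →
      Tendsto g (𝓝[Iio y] y) (𝓝 (xhat y)) → ContinuousWithinAt xhat (Iic y) y := by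
    intro y δ hδ g heq hg
    have h1 : ContinuousWithinAt xhat (Iio y) y := by
      have hmem : Ioo (y - δ) y ∈ 𝓝[Iio y] y := Ioo_mem_nhdsLT_of_mem ⟨by linarith, le_rfl⟩
      have hEq : g =ᶠ[𝓝[Iio y] y] xhat := by
        filter_upwards [hmem] with z hz
        exact (heq z hz.1 hz.2).symm
      exact hg.congr' hEq
    have h2 : ContinuousWithinAt xhat {y} y := continuousWithinAt_singleton
    have h3 := h1.union h2
    rwa [Iio_union_right] at h3
  -- continuity from the right at points of the image of τ
  have himageRight : ∀ s, 0 ≤ s → s < T → ContinuousWithinAt xhat (Ici (τ s)) (τ s) := by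
    intro s hs0 hsT
    obtain ⟨δ, hδpos, hδ⟩ := exists_sep t s
    set δ' := min δ (T - s) with hδ'
    have hδ'1 : δ' ≤ δ := min_le_left _ _
    have hδ'2 : δ' ≤ T - s := min_le_right _ _
    have hδ'pos : 0 < δ' := lt_min hδpos (by linarith)
    refine hrightHelp (τ s) δ' hδ'pos (fun z => x (z - C s)) ?_ ?_
    · intro z h1 h2
      rw [hτ'] at h1 h2
      have hu1 : s ≤ z - C s := by linarith
      have hu2 : z - C s < s + δ' := by linarith
      have hCu : C (z - C s) = C s := hCright s δ hδ _ hu1 (by linarith)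
      have hτu : τ (z - C s) = z := by rw [hτ', hCu]; ring
      show xhat z = x (z - C s)
      have hv := hhat₁ (z - C s) ⟨hs0.trans hu1, by linarith⟩
      rwa [hτu] at hv
    · have h1 : Tendsto (fun z => z - C s) (𝓝[Ici (τ s)] (τ s)) (𝓝[Ici s] s) := by
        rw [tendsto_nhdsWithin_iff]
        constructor
        · have hc : Tendsto (fun z => z - C s) (𝓝 (τ s)) (𝓝 (τ s - C s)) :=
            (continuous_sub_right (C s)).tendsto (τ s)
          have h2 : Tendsto (fun z => z - C s) (𝓝[Ici (τ s)] (τ s)) (𝓝 (τ s - C s)) :=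
            hc.mono_left nhdsWithin_le_nhds
          have h3 : τ s - C s = s := by rw [hτ']; ring
          rwa [h3] at h2
        · filter_upwards [self_mem_nhdsWithin] with z hz
          rw [mem_Ici] at hz ⊢
          rw [hτ'] at hz
          linarith
      have h2 := (hright s ⟨hs0, hsT⟩).comp h1
      rw [hhat₁ s ⟨hs0, hsT.le⟩]
      exact h2
  -- continuity from the left at image points which are not jumps
  have himageLeft : ∀ s, 0 < s → s ≤ T → (∀ j, t j ≠ s) →
      ContinuousWithinAt xhat (Iic (τ s)) (τ s) := by
    intro s hs0 hsT hnj
    obtain ⟨δ, hδpos, hδ⟩ := exists_sep t s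
    set δ' := min δ s with hδ'
    have hδ'1 : δ' ≤ δ := min_le_left _ _
    have hδ'2 : δ' ≤ s := min_le_right _ _
    have hδ'pos : 0 < δ' := lt_min hδpos hs0
    refine hleftHelp (τ s) δ' hδ'pos (fun z => x (z - C s)) ?_ ?_
    · intro z h1 h2
      rw [hτ'] at h1 h2
      have hu1 : s - δ' < z - C s := by linarith
      have hu2 : z - C s < s := by linarith
      have hCu : C (z - C s) = C s := hCleftNo s δ hδ hnj _ (by linarith) hu2.le
      have hτu : τ (z - C s) = z := by rw [hτ', hCu]; ring
      show xhat z = x (z - C s)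
      have hv := hhat₁ (z - C s) ⟨by linarith, hu2.le.trans hsT⟩
      rwa [hτu] at hv
    · have hxl : xl s = x s := by
        by_contra h
        obtain ⟨k, hk⟩ := hjumps s ⟨hs0, hsT⟩ h
        exact hnj k hk
      have h1 : Tendsto (fun z => z - C s) (𝓝[Iio (τ s)] (τ s)) (𝓝[Iio s] s) := by
        rw [tendsto_nhdsWithin_iff]
        constructor
        · have hc : Tendsto (fun z => z - C s) (𝓝 (τ s)) (𝓝 (τ s - C s)) :=
            (continuous_sub_right (C s)).tendsto (τ s)
          have h2 : Tendsto (fun z => z - C s) (𝓝[Iio (τ s)] (τ s)) (𝓝 (τ s - C s)) :=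
            hc.mono_left nhdsWithin_le_nhds
          have h3 : τ s - C s = s := by rw [hτ']; ring
          rwa [h3] at h2
        · filter_upwards [self_mem_nhdsWithin] with z hz
          rw [mem_Iio] at hz ⊢
          rw [hτ'] at hz
          linarith
      have h2 := (hleft s ⟨hs0, hsT⟩).comp h1
      rw [hxl] at h2
      rw [hhat₁ s ⟨hs0.le, hsT⟩]
      exact h2
  -- continuity from the right inside an inserted interval
  have hinsRight : ∀ k (y : ℝ), τ (t k) - rk k ≤ y → y < τ (t k) →
      ContinuousWithinAt xhat (Ici y) y := by
    intro k y h1 h2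
    have hrkpos := hrk k
    refine hrightHelp y (τ (t k) - y) (by linarith) (fun z => Φ k ((z - (τ (t k) - rk k)) / rk k)) ?_ ?_
    · intro z hz1 hz2
      have hz2' : z < τ (t k) := by linarith
      have hu : (z - (τ (t k) - rk k)) / rk k ∈ Icc (0:ℝ) 1 := by
        constructor
        · exact div_nonneg (by linarith) hrkpos.le
        · exact ((div_lt_one hrkpos).mpr (by linarith)).le
      have h3 := hhat₂ k _ hu
      have harg : τ (t k) - rk k + (z - (τ (t k) - rk k)) / rk k * rk k = z := by
        field_simp
        ring
      rw [harg] at h3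
      exact h3
    · have hu0 : (y - (τ (t k) - rk k)) / rk k ∈ Icc (0:ℝ) 1 := by
        constructor
        · exact div_nonneg (by linarith) hrkpos.le
        · exact ((div_lt_one hrkpos).mpr (by linarith)).le
      have hval : xhat y = Φ k ((y - (τ (t k) - rk k)) / rk k) := by
        have h3 := hhat₂ k _ hu0
        have harg : τ (t k) - rk k + (y - (τ (t k) - rk k)) / rk k * rk k = y := by
          field_simp
          ring
        rwa [harg] at h3
      rw [hval]
      have hmap : Tendsto (fun z => (z - (τ (t k) - rk k)) / rk k) (𝓝[Ici y] y)
          (𝓝[Icc (0:ℝ) 1] ((y - (τ (t k) - rk k)) / rk k)) := by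
        rw [tendsto_nhdsWithin_iff]
        constructor
        · exact Tendsto.mono_left
            (((continuous_sub_right (τ (t k) - rk k)).div_const (rk k)).tendsto y)
            nhdsWithin_le_nhds
        · have hmem : Ico y (τ (t k)) ∈ 𝓝[Ici y] y := Ico_mem_nhdsGE_of_mem ⟨le_rfl, h2⟩
          filter_upwards [hmem] with z hz
          exact ⟨div_nonneg (by linarith [hz.1]) hrkpos.le,
            ((div_lt_one hrkpos).mpr (by linarith [hz.2])).le⟩
      exact Filter.Tendsto.comp (hΦcont k _ hu0) hmap
  -- continuity from the left inside an inserted interval (including its right endpoint)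
  have hinsLeft : ∀ k (y : ℝ), τ (t k) - rk k < y → y ≤ τ (t k) →
      ContinuousWithinAt xhat (Iic y) y := by
    intro k y h1 h2
    have hrkpos := hrk k
    refine hleftHelp y (y - (τ (t k) - rk k)) (by linarith)
      (fun z => Φ k ((z - (τ (t k) - rk k)) / rk k)) ?_ ?_
    · intro z hz1 hz2
      have hz1' : τ (t k) - rk k < z := by linarith
      have hu : (z - (τ (t k) - rk k)) / rk k ∈ Icc (0:ℝ) 1 := by
        constructor
        · exact div_nonneg (by linarith) hrkpos.le
        · exact (div_le_one hrkpos).mpr (by linarith)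
      have h3 := hhat₂ k _ hu
      have harg : τ (t k) - rk k + (z - (τ (t k) - rk k)) / rk k * rk k = z := by
        field_simp
        ring
      rw [harg] at h3
      exact h3
    · have hu0 : (y - (τ (t k) - rk k)) / rk k ∈ Icc (0:ℝ) 1 := by
        constructor
        · exact div_nonneg (by linarith) hrkpos.le
        · exact (div_le_one hrkpos).mpr (by linarith)
      have hval : xhat y = Φ k ((y - (τ (t k) - rk k)) / rk k) := by
        have h3 := hhat₂ k _ hu0
        have harg : τ (t k) - rk k + (y - (τ (t k) - rk k)) / rk k * rk k = y := by
          field_simp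
          ring
        rwa [harg] at h3
      rw [hval]
      have hmap : Tendsto (fun z => (z - (τ (t k) - rk k)) / rk k) (𝓝[Iio y] y)
          (𝓝[Icc (0:ℝ) 1] ((y - (τ (t k) - rk k)) / rk k)) := by
        rw [tendsto_nhdsWithin_iff]
        constructor
        · exact Tendsto.mono_left
            (((continuous_sub_right (τ (t k) - rk k)).div_const (rk k)).tendsto y)
            nhdsWithin_le_nhds
        · have hmem : Ioo (τ (t k) - rk k) y ∈ 𝓝[Iio y] y :=
            Ioo_mem_nhdsLT_of_mem ⟨h1, le_rfl⟩
          filter_upwards [hmem] with z hz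
          exact ⟨div_nonneg (by linarith [hz.1]) hrkpos.le,
            (div_le_one hrkpos).mpr (by linarith [hz.2])⟩
      exact Filter.Tendsto.comp (hΦcont k _ hu0) hmap
  -- continuity from the left at the left endpoint of an inserted interval
  have hleftEnd : ∀ k, ContinuousWithinAt xhat (Iic (τ (t k) - rk k)) (τ (t k) - rk k) := by
    intro k
    obtain ⟨δ, hδpos, hδ⟩ := exists_sep t (t k)
    have htk := htmem k
    set δ' := min δ (t k) with hδ'
    have hδ'1 : δ' ≤ δ := min_le_left _ _
    have hδ'2 : δ' ≤ t k := min_le_right _ _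
    have hδ'pos : 0 < δ' := lt_min hδpos htk.1
    have hshift : τ (t k) - rk k - t k = C (t k) - rk k := by rw [hτ']; ring
    refine hleftHelp (τ (t k) - rk k) δ' hδ'pos
      (fun z => x (z - (τ (t k) - rk k - t k))) ?_ ?_
    · intro z h1 h2
      have hu1 : t k - δ' < z - (τ (t k) - rk k - t k) := by linarith
      have hu2 : z - (τ (t k) - rk k - t k) < t k := by linarith
      have hCu : C (z - (τ (t k) - rk k - t k)) = C (t k) - rk k :=
        hCleftJump k δ hδ _ (by linarith) hu2
      have hτu : τ (z - (τ (t k) - rk k - t k)) = z := by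
        rw [hτ', hCu]
        rw [hτ']
        ring
      show xhat z = x (z - (τ (t k) - rk k - t k))
      have hv := hhat₁ (z - (τ (t k) - rk k - t k)) ⟨by linarith, hu2.le.trans htk.2⟩
      rwa [hτu] at hv
    · have hval : xhat (τ (t k) - rk k) = xl (t k) := by
        have h3 := hhat₂ k 0 ⟨le_rfl, zero_le_one⟩
        rw [zero_mul, add_zero] at h3
        rw [h3, hΦ0]
      rw [hval]
      have h1 : Tendsto (fun z => z - (τ (t k) - rk k - t k))
          (𝓝[Iio (τ (t k) - rk k)] (τ (t k) - rk k)) (𝓝[Iio (t k)] (t k)) := by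
        rw [tendsto_nhdsWithin_iff]
        constructor
        · have hc : Tendsto (fun z => z - (τ (t k) - rk k - t k)) (𝓝 (τ (t k) - rk k))
              (𝓝 (τ (t k) - rk k - (τ (t k) - rk k - t k))) :=
            (continuous_sub_right (τ (t k) - rk k - t k)).tendsto (τ (t k) - rk k)
          have h2 : Tendsto (fun z => z - (τ (t k) - rk k - t k))
              (𝓝[Iio (τ (t k) - rk k)] (τ (t k) - rk k))
              (𝓝 (τ (t k) - rk k - (τ (t k) - rk k - t k))) :=
            hc.mono_left nhdsWithin_le_nhds
          have h3 : τ (t k) - rk k - (τ (t k) - rk k - t k) = t k := by ring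
          rwa [h3] at h2
        · filter_upwards [self_mem_nhdsWithin] with z hz
          rw [mem_Iio] at hz ⊢
          linarith
      exact (hleft (t k) ⟨htk.1, htk.2⟩).comp h1
  -- assemble
  intro y hy
  have hIci : ContinuousWithinAt xhat (Icc 0 M ∩ Ici y) y := by
    by_cases hyM : y = M
    · have hsub : Icc 0 M ∩ Ici y ⊆ {y} := by
        intro z hz
        have := hz.1.2
        have := hz.2
        rw [mem_Ici] at this
        simp only [mem_singleton_iff]
        rw [hyM] at this ⊢
        exact le_antisymm hz.1.2 this
      exact continuousWithinAt_singleton.mono hsub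
    · have hyM' : y < M := lt_of_le_of_ne hy.2 hyM
      have hmain : ContinuousWithinAt xhat (Ici y) y := by
        rcases hcover y hy with ⟨s, hs, rfl⟩ | ⟨k, h1, h2⟩
        · refine himageRight s hs.1 ?_
          rcases eq_or_lt_of_le hs.2 with h | h
          · exfalso; rw [h, hτT] at hyM'; exact lt_irrefl _ hyM'
          · exact h
        · exact hinsRight k y h1 h2
      exact hmain.mono inter_subset_right
  have hIic : ContinuousWithinAt xhat (Icc 0 M ∩ Iic y) y := by
    by_cases hy0 : y = 0
    · have hsub : Icc 0 M ∩ Iic y ⊆ {y} := by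
        intro z hz
        simp only [mem_singleton_iff]
        rw [hy0] at hz ⊢
        exact le_antisymm hz.2 hz.1.1
      exact continuousWithinAt_singleton.mono hsub
    · have hy0' : 0 < y := lt_of_le_of_ne hy.1 (Ne.symm hy0)
      have hmain : ContinuousWithinAt xhat (Iic y) y := by
        rcases hcover y hy with ⟨s, hs, rfl⟩ | ⟨k, h1, h2⟩
        · have hs0 : 0 < s := by
            rcases eq_or_lt_of_le hs.1 with h | h
            · exfalso; rw [← h, hτ0] at hy0'; exact lt_irrefl _ hy0'
            · exact h
          by_cases hj : ∃ k, t k = s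
          · obtain ⟨k, hk⟩ := hj
            refine hinsLeft k (τ s) ?_ ?_
            · rw [hk]; linarith [hrk k]
            · rw [hk]
          · push_neg at hj
            exact himageLeft s hs0 hs.2 hj
        · rcases eq_or_lt_of_le h1 with heq | hlt
          · exact heq ▸ hleftEnd k
          · exact hinsLeft k y hlt h2.le
      exact hmain.mono inter_subset_right
  refine (hIic.union hIci).mono fun z hz => ?_
  rcases le_total z y with h | h
  · exact Or.inl ⟨hz, h⟩
  · exact Or.inr ⟨hz, h⟩
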